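/- Let n ≥ 1, and let t, m be natural numbers with t ≤ n and m ≤ n. Then ∑_{x=0}^{m} 4^x · C(t, x) · C(n−t, m−x) ≤ (1 + 3·t/n)^m · C(n, m), where the sum and the right-hand side are taken in ℝ. Equivalently, if X is the hypergeometric random variable counting how many of t uniformly-placed erasures fall inside a fixed region of m out of n qubits, then E[2^{2X}] ≤ (1 + 3t/n)^m. -/

import Mathlib

open Finset

lemma desc_le (n t j : ℕ) (ht : t ≤ n) :
    n ^ j * t.descFactorial j ≤ t ^ j * n.descFactorial j := by
  induction j with
  | zero => simp
  | succ j ih =>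
    rw [Nat.descFactorial_succ, Nat.descFactorial_succ, pow_succ, pow_succ]
    calc n ^ j * n * ((t - j) * t.descFactorial j)
        = (n * (t - j)) * (n ^ j * t.descFactorial j) := by ring
      _ ≤ (t * (n - j)) * (t ^ j * n.descFactorial j) := by
          apply Nat.mul_le_mul _ ih
          rcases le_or_gt j t with h | h
          · rcases le_or_gt j n with h2 | h2
            · zify [h, h2]; nlinarith [Nat.sub_le t j]
            · omega
          · simp [Nat.sub_eq_zero_of_le h.le]
      _ = t ^ j * t * ((n - j) * n.descFactorial j) := by ring

lemma choose_ratio (n t j : ℕ) (hn : 1 ≤ n) (ht : t ≤ n) :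
    (t.choose j : ℝ) ≤ ((t : ℝ) / n) ^ j * n.choose j := by
  have hn' : (0 : ℝ) < n := by exact_mod_cast hn
  have h1 : n ^ j * t.choose j ≤ t ^ j * n.choose j := by
    have h := desc_le n t j ht
    rw [Nat.descFactorial_eq_factorial_mul_choose, Nat.descFactorial_eq_factorial_mul_choose] at h
    have h2 : Nat.factorial j * (n ^ j * t.choose j) ≤ Nat.factorial j * (t ^ j * n.choose j) := by
      calc Nat.factorial j * (n ^ j * t.choose j)
          = n ^ j * (Nat.factorial j * t.choose j) := by ring
        _ ≤ t ^ j * (Nat.factorial j * n.choose j) := h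
        _ = Nat.factorial j * (t ^ j * n.choose j) := by ring
    exact Nat.le_of_mul_le_mul_left h2 (Nat.factorial_pos j)
  have h1' : ((n : ℝ)) ^ j * t.choose j ≤ (t : ℝ) ^ j * n.choose j := by exact_mod_cast h1
  rw [div_pow, div_mul_eq_mul_div, le_div_iff₀ (by positivity : (0:ℝ) < (n:ℝ) ^ j)]
  linarith [h1']

lemma vdm_range (a b k : ℕ) :
    ∑ y ∈ range (k + 1), a.choose y * b.choose (k - y) = (a + b).choose k := by
  rw [Nat.add_choose_eq, Finset.Nat.sum_antidiagonal_eq_sum_range_succ_mk]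

lemma innerSumEq (n t m j : ℕ) (ht : t ≤ n) (hj : j ≤ m) :
    ∑ x ∈ range (m + 1), t.choose x * x.choose j * (n - t).choose (m - x)
      = t.choose j * (n - j).choose (m - j) := by
  rcases lt_or_ge t j with hjt | hjt
  · rw [Nat.choose_eq_zero_of_lt hjt, zero_mul]
    apply Finset.sum_eq_zero
    intro x _
    rcases lt_or_ge x j with h | h
    · rw [Nat.choose_eq_zero_of_lt h, mul_zero, zero_mul]
    · rw [Nat.choose_eq_zero_of_lt (lt_of_lt_of_le hjt h), zero_mul, zero_mul]
  · have hsub : Finset.Ico j (m + 1) ⊆ range (m + 1) := by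
      intro x hx; simp at hx ⊢; omega
    rw [← Finset.sum_subset hsub (by
      intro x hx hx'
      simp only [Finset.mem_range] at hx
      simp only [Finset.mem_Ico] at hx'
      have : x < j := by omega
      rw [Nat.choose_eq_zero_of_lt this, mul_zero, zero_mul])]
    rw [Finset.sum_Ico_eq_sum_range]
    have hrange : m + 1 - j = (m - j) + 1 := by omega
    rw [hrange]
    have hpt : ∀ y, t.choose (j + y) * (j + y).choose j * (n - t).choose (m - (j + y))
        = t.choose j * ((t - j).choose y * (n - t).choose ((m - j) - y)) := by
      intro y
      have hm : m - (j + y) = (m - j) - y := by omega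
      rcases le_or_gt (j + y) t with h | h
      · rw [Nat.choose_mul (Nat.le_add_right j y), Nat.add_sub_cancel_left, hm, mul_assoc]
      · rw [Nat.choose_eq_zero_of_lt h, Nat.choose_eq_zero_of_lt (by omega : t - j < y)]
        ring
    calc ∑ y ∈ range ((m - j) + 1),
            t.choose (j + y) * (j + y).choose j * (n - t).choose (m - (j + y))
        = ∑ y ∈ range ((m - j) + 1),
            t.choose j * ((t - j).choose y * (n - t).choose ((m - j) - y)) := by
          exact Finset.sum_congr rfl fun y _ => hpt y
      _ = t.choose j * ∑ y ∈ range ((m - j) + 1),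
            (t - j).choose y * (n - t).choose ((m - j) - y) := by rw [Finset.mul_sum]
      _ = t.choose j * ((t - j) + (n - t)).choose (m - j) := by rw [vdm_range]
      _ = t.choose j * (n - j).choose (m - j) := by
          congr 2; omega

lemma key_id (n t m : ℕ) (ht : t ≤ n) :
    ∑ x ∈ range (m + 1), 4 ^ x * t.choose x * (n - t).choose (m - x)
      = ∑ j ∈ range (m + 1), 3 ^ j * t.choose j * (n - j).choose (m - j) := by
  have h4 : ∀ x ∈ range (m + 1), (4 : ℕ) ^ x = ∑ j ∈ range (m + 1), 3 ^ j * x.choose j := by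
    intro x hx
    simp only [Finset.mem_range] at hx
    have : (4 : ℕ) ^ x = (3 + 1) ^ x := by norm_num
    rw [this, add_pow]
    simp only [one_pow, mul_one]
    apply Finset.sum_subset (by intro y hy; simp at hy ⊢; omega)
    intro y hy hy'
    simp only [Finset.mem_range] at hy hy'
    simp [Nat.choose_eq_zero_of_lt (by omega : x < y)]
  calc ∑ x ∈ range (m + 1), 4 ^ x * t.choose x * (n - t).choose (m - x)
      = ∑ x ∈ range (m + 1), ∑ j ∈ range (m + 1),
          3 ^ j * (t.choose x * x.choose j * (n - t).choose (m - x)) := by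
        apply Finset.sum_congr rfl
        intro x hx
        rw [h4 x hx, Finset.sum_mul, Finset.sum_mul]
        apply Finset.sum_congr rfl
        intro j _
        ring
    _ = ∑ j ∈ range (m + 1), 3 ^ j *
          ∑ x ∈ range (m + 1), t.choose x * x.choose j * (n - t).choose (m - x) := by
        rw [Finset.sum_comm]
        exact Finset.sum_congr rfl fun j _ => (Finset.mul_sum _ _ _).symm
    _ = ∑ j ∈ range (m + 1), 3 ^ j * t.choose j * (n - j).choose (m - j) := by
        apply Finset.sum_congr rfl
        intro j hj
        simp only [Finset.mem_range] at hj
        rw [innerSumEq n t m j ht (by omega), mul_assoc]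


/-- Hypergeometric moment bound: if `X` counts how many of `t` uniformly placed erasures
fall inside a fixed region of `m` of the `n` qubits, then `E[2^{2X}] ≤ (1 + 3t/n)^m`,
i.e. `∑_{x=0}^m 4^x C(t,x) C(n−t, m−x) ≤ (1 + 3t/n)^m C(n,m)`. -/
theorem hypergeometric_mgf_bound (n t m : ℕ) (hn : 1 ≤ n) (ht : t ≤ n) (hm : m ≤ n) :
    ∑ x ∈ Finset.range (m + 1),
        (4 : ℝ) ^ x * (t.choose x : ℝ) * ((n - t).choose (m - x) : ℝ)
      ≤ (1 + 3 * (t : ℝ) / (n : ℝ)) ^ m * (n.choose m : ℝ) := by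
  have hn' : (0 : ℝ) < n := by exact_mod_cast hn
  have hL : ∑ x ∈ Finset.range (m + 1),
        (4 : ℝ) ^ x * (t.choose x : ℝ) * ((n - t).choose (m - x) : ℝ)
      = ∑ j ∈ Finset.range (m + 1),
          (3 : ℝ) ^ j * (t.choose j : ℝ) * ((n - j).choose (m - j) : ℝ) := by
    have := key_id n t m ht
    have h1 : ((∑ x ∈ range (m + 1), 4 ^ x * t.choose x * (n - t).choose (m - x) : ℕ) : ℝ)
        = ((∑ j ∈ range (m + 1), 3 ^ j * t.choose j * (n - j).choose (m - j) : ℕ) : ℝ) := by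
      exact_mod_cast congrArg (Nat.cast : ℕ → ℝ) this
    push_cast at h1
    exact h1
  rw [hL, add_comm (1 : ℝ), add_pow]
  simp only [one_pow, mul_one]
  rw [Finset.sum_mul]
  apply Finset.sum_le_sum
  intro j hj
  simp only [Finset.mem_range] at hj
  have hjm : j ≤ m := by omega
  have hid : (n.choose j : ℝ) * ((n - j).choose (m - j) : ℝ) = (n.choose m : ℝ) * (m.choose j : ℝ) := by
    have := Nat.choose_mul (n := n) hjm
    exact_mod_cast congrArg (Nat.cast : ℕ → ℝ) this.symm
  have hcr := choose_ratio n t j hn ht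
  calc (3 : ℝ) ^ j * (t.choose j : ℝ) * ((n - j).choose (m - j) : ℝ)
      ≤ (3 : ℝ) ^ j * (((t : ℝ) / n) ^ j * (n.choose j : ℝ)) * ((n - j).choose (m - j) : ℝ) := by
        apply mul_le_mul_of_nonneg_right _ (by positivity)
        exact mul_le_mul_of_nonneg_left hcr (by positivity)
    _ = (3 * (t : ℝ) / n) ^ j * ((n.choose j : ℝ) * ((n - j).choose (m - j) : ℝ)) := by
        rw [mul_div_assoc, mul_pow]; ring
    _ = (3 * (t : ℝ) / n) ^ j * ↑(m.choose j) * ↑(n.choose m) := by rw [hid]; ring
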